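/- Derivative of the positive part of the double-exponential tail: Let ν be a Borel measure on ℝ such that ν([y, ∞)) < ∞ and ∫_{[y, ∞)} e^x dν(x) < ∞ for every y > 0. Define φ(y) = ∫_{[y, ∞)} (e^x − e^y) dν(x) for y > 0. If z > 0 satisfies ν({z}) = 0, then φ is differentiable at z with φ′(z) = −e^z · ν([z, ∞)). -/

import Mathlib

open MeasureTheory Real Set Topology Filter

/-- Derivative of the positive part of the double-exponential tail: if `ν` is a Borel
measure on `ℝ` with `ν([y, ∞)) < ∞` and `∫_{[y, ∞)} e^x dν(x) < ∞` for every
`y > 0`, and `φ(y) = ∫_{[y, ∞)} (e^x − e^y) dν(x)` for `y > 0`, then at every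
`z > 0` with `ν({z}) = 0` the function `φ` is differentiable with
`φ′(z) = −e^z ν([z, ∞))`. -/
theorem deriv_pos_double_exponential_tail (ν : Measure ℝ)
    (hfin : ∀ y > (0 : ℝ), ν (Ici y) < ⊤)
    (hint : ∀ y > (0 : ℝ), IntegrableOn (fun x => exp x) (Ici y) ν)
    (z : ℝ) (hz : 0 < z) (hatom : ν {z} = 0) :
    HasDerivAt (fun y => ∫ x in Ici y, (exp x - exp y) ∂ν)
      (-(exp z * (ν (Ici z)).toReal)) z := by
  set φ : ℝ → ℝ := fun y => ∫ x in Ici y, (exp x - exp y) ∂ν with hφ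
  set A : ℝ → ℝ := fun y => ∫ x in Ici y, exp x ∂ν with hA
  set m : ℝ → ℝ := fun y => (ν (Ici y)).toReal with hm
  set c : ℝ → ℝ := fun y => (ν (Ico (min y z) (max y z))).toReal with hc
  have hmz : (ν (Ici z)).toReal = m z := rfl
  have hmnonneg : ∀ y : ℝ, 0 ≤ m y := fun y => ENNReal.toReal_nonneg
  have hrep : ∀ y, 0 < y → φ y = A y - exp y * m y := by
    intro y hy
    have h1 : IntegrableOn (fun _ : ℝ => exp y) (Ici y) ν :=
      integrableOn_const (hfin y hy).ne
    simp only [hφ, hA, hm]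
    rw [integral_sub (hint y hy) h1, setIntegral_const, smul_eq_mul, mul_comm]
    rfl
  have hdisj : ∀ a b : ℝ, Disjoint (Ico a b) (Ici b) :=
    fun a b => disjoint_left.2 fun x hx hx' => hx.2.not_ge hx'
  have hIcofin : ∀ a b : ℝ, 0 < a → ν (Ico a b) ≠ ⊤ :=
    fun a b ha => ((measure_mono Ico_subset_Ici_self).trans_lt (hfin a ha)).ne
  have hsplitA : ∀ a b : ℝ, 0 < a → a ≤ b →
      A a = (∫ x in Ico a b, exp x ∂ν) + A b := by
    intro a b ha hab
    have hb : 0 < b := lt_of_lt_of_le ha hab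
    simp only [hA]
    rw [← Ico_union_Ici_eq_Ici hab,
      setIntegral_union (hdisj a b) measurableSet_Ici
        ((hint a ha).mono_set Ico_subset_Ici_self) (hint b hb)]
  have hsplitm : ∀ a b : ℝ, 0 < a → a ≤ b →
      m a = (ν (Ico a b)).toReal + m b := by
    intro a b ha hab
    have hb : 0 < b := lt_of_lt_of_le ha hab
    simp only [hm]
    rw [← Ico_union_Ici_eq_Ici hab, measure_union (hdisj a b) measurableSet_Ici,
      ENNReal.toReal_add (hIcofin a b ha) (hfin b hb).ne]
  have hlb : ∀ a b : ℝ, 0 < a → a ≤ b →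
      exp a * (ν (Ico a b)).toReal ≤ ∫ x in Ico a b, exp x ∂ν := by
    intro a b ha hab
    have := setIntegral_mono_on (s := Ico a b)
      (integrableOn_const ((measure_mono Ico_subset_Ici_self).trans_lt (hfin a ha)).ne)
      ((hint a ha).mono_set Ico_subset_Ici_self) measurableSet_Ico
      (fun x hx => exp_le_exp.2 hx.1)
    rwa [setIntegral_const, smul_eq_mul, mul_comm] at this
  have hub : ∀ a b : ℝ, 0 < a → a ≤ b →
      (∫ x in Ico a b, exp x ∂ν) ≤ exp b * (ν (Ico a b)).toReal := by
    intro a b ha hab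
    have := setIntegral_mono_on (s := Ico a b)
      ((hint a ha).mono_set Ico_subset_Ici_self)
      (integrableOn_const ((measure_mono Ico_subset_Ici_self).trans_lt (hfin a ha)).ne)
      measurableSet_Ico (fun x hx => exp_le_exp.2 hx.2.le)
    rwa [setIntegral_const, smul_eq_mul, mul_comm] at this
  -- the measure of the small interval tends to 0
  have hIccT : Tendsto (fun δ : ℝ => ν (Icc (z - δ) (z + δ))) (𝓝[>] (0:ℝ)) (𝓝 (ν {z})) := by
    rw [Real.singleton_eq_inter_Icc]
    apply tendsto_measure_biInter_gt (fun r _ => nullMeasurableSet_Icc)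
    · intro i j hi hij
      exact Icc_subset_Icc (by linarith) (by linarith)
    · refine ⟨z/2, by linarith, ?_⟩
      refine ((measure_mono fun x hx => ?_).trans_lt (hfin (z/2) (by linarith))).ne
      have := hx.1
      simp only [mem_Ici]
      linarith
  have habs : Tendsto (fun y : ℝ => |y - z|) (𝓝[≠] z) (𝓝[>] (0:ℝ)) := by
    rw [tendsto_nhdsWithin_iff]
    constructor
    · have : Tendsto (fun y : ℝ => |y - z|) (𝓝 z) (𝓝 |z - z|) :=
        ((continuous_id.sub continuous_const).abs).tendsto z
      simpa using this.mono_left nhdsWithin_le_nhds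
    · filter_upwards [eventually_mem_nhdsWithin] with y hy
      exact abs_pos.2 (sub_ne_zero.2 hy)
  have hν0 : Tendsto (fun y : ℝ => ν (Ico (min y z) (max y z))) (𝓝[≠] z) (𝓝 0) := by
    have hcomp : Tendsto (fun y : ℝ => ν (Icc (z - |y - z|) (z + |y - z|)))
        (𝓝[≠] z) (𝓝 0) := by
      have := hIccT.comp habs
      rwa [hatom] at this
    refine tendsto_of_tendsto_of_tendsto_of_le_of_le' tendsto_const_nhds hcomp
      (Filter.Eventually.of_forall fun y => zero_le)
      (Filter.Eventually.of_forall fun y => measure_mono fun x hx => ?_)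
    rcases le_total y z with h | h
    · rw [min_eq_left h, max_eq_right h] at hx
      rw [abs_of_nonpos (by linarith)]
      exact ⟨by simpa using hx.1.trans' (by linarith), by linarith [hx.2.le]⟩
    · rw [min_eq_right h, max_eq_left h] at hx
      rw [abs_of_nonneg (by linarith)]
      exact ⟨by linarith [hx.1], by linarith [hx.2.le]⟩
  have hctend : Tendsto c (𝓝[≠] z) (𝓝 0) := by
    have : Tendsto ENNReal.toReal (𝓝 (0 : ENNReal)) (𝓝 ((0:ENNReal)).toReal) :=
      ENNReal.tendsto_toReal (by simp)
    simpa [hc, Function.comp_def] using this.comp hν0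
  have hs : Tendsto (slope Real.exp z) (𝓝[≠] z) (𝓝 (exp z)) :=
    hasDerivAt_iff_tendsto_slope.1 (Real.hasDerivAt_exp z)
  rw [hasDerivAt_iff_tendsto_slope]
  rw [hmz]
  -- main eventual bound
  have hkey : ∀ᶠ y in 𝓝[≠] z, ‖slope φ z y - (-(exp z * m z))‖ ≤
      (slope Real.exp z y + exp z) * c y + |slope Real.exp z y - exp z| * m z := by
    have h0 : ∀ᶠ y in 𝓝[≠] z, 0 < y :=
      (isOpen_Ioi.eventually_mem (show z ∈ Ioi 0 from hz)).filter_mono nhdsWithin_le_nhds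
    filter_upwards [h0, eventually_mem_nhdsWithin] with y hy0 hyz
    replace hyz : y ≠ z := hyz
    have hyz' : y - z ≠ 0 := sub_ne_zero.2 hyz
    rw [Real.norm_eq_abs, slope_def_field, slope_def_field]
    set s : ℝ := (Real.exp y - Real.exp z) / (y - z) with hsdef
    rcases lt_or_gt_of_ne hyz with hlt | hlt
    · -- y < z
      have hmin : min y z = y := min_eq_left hlt.le
      have hmax : max y z = z := max_eq_right hlt.le
      set I : ℝ := ∫ x in Ico y z, exp x ∂ν with hI
      have hcv : c y = (ν (Ico y z)).toReal := by rw [hc]; simp only [hmin, hmax]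
      set cv : ℝ := (ν (Ico y z)).toReal with hcvdef
      have hcv0 : 0 ≤ cv := ENNReal.toReal_nonneg
      have hI1 : exp y * cv ≤ I := hlb y z hy0 hlt.le
      have hI2 : I ≤ exp z * cv := hub y z hy0 hlt.le
      have hd : (0:ℝ) < z - y := by linarith
      have hsd : s * (z - y) = exp z - exp y := by
        rw [hsdef, show z - y = -(y - z) by ring, mul_neg, div_mul_cancel₀ _ hyz']
        ring
      have key : (φ y - φ z) / (y - z) - (-(exp z * m z)) =
          (I - exp y * cv) / (y - z) + (exp z - s) * m z := by
        rw [hrep y hy0, hrep z hz, hsplitA y z hy0 hlt.le, hsplitm y z hy0 hlt.le, hsdef]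
        field_simp
        ring
      rw [key, hcv]
      have habs1 : |(I - exp y * cv) / (y - z)| ≤ s * cv := by
        rw [abs_div, abs_of_nonneg (by linarith), abs_of_neg (by linarith : y - z < 0),
          div_le_iff₀ (by linarith : (0:ℝ) < -(y - z))]
        have h2 : s * cv * -(y - z) = (exp z - exp y) * cv := by
          rw [show s * cv * -(y - z) = s * (z - y) * cv by ring, hsd]
        rw [h2]
        nlinarith
      calc |(I - exp y * cv) / (y - z) + (exp z - s) * m z|
          ≤ |(I - exp y * cv) / (y - z)| + |exp z - s| * m z := by
            refine (abs_add_le _ _).trans ?_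
            rw [abs_mul, abs_of_nonneg (hmnonneg z)]
        _ ≤ (s + exp z) * cv + |s - exp z| * m z := by
            rw [abs_sub_comm]
            nlinarith [exp_pos z, habs1]
    · -- z < y
      have hmin : min y z = z := min_eq_right hlt.le
      have hmax : max y z = y := max_eq_left hlt.le
      set I : ℝ := ∫ x in Ico z y, exp x ∂ν with hI
      have hcv : c y = (ν (Ico z y)).toReal := by rw [hc]; simp only [hmin, hmax]
      set cv : ℝ := (ν (Ico z y)).toReal with hcvdef
      have hcv0 : 0 ≤ cv := ENNReal.toReal_nonneg
      have hI1 : exp z * cv ≤ I := hlb z y hz hlt.le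
      have hI2 : I ≤ exp y * cv := hub z y hz hlt.le
      have hd : (0:ℝ) < y - z := by linarith
      have hsd : s * (y - z) = exp y - exp z := by
        rw [hsdef, div_mul_cancel₀ _ hyz']
      have key : (φ y - φ z) / (y - z) - (-(exp z * m z)) =
          (exp y * cv - I) / (y - z) + (exp z - s) * m z := by
        rw [hrep y hy0, hrep z hz, hsplitA z y hz hlt.le, hsplitm z y hz hlt.le, hsdef]
        field_simp
        ring
      rw [key, hcv]
      have habs1 : |(exp y * cv - I) / (y - z)| ≤ s * cv := by
        rw [abs_div, abs_of_nonneg (by linarith), abs_of_pos hd,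
          div_le_iff₀ hd]
        have h2 : s * cv * (y - z) = (exp y - exp z) * cv := by
          rw [show s * cv * (y - z) = s * (y - z) * cv by ring, hsd]
        rw [h2]
        nlinarith
      calc |(exp y * cv - I) / (y - z) + (exp z - s) * m z|
          ≤ |(exp y * cv - I) / (y - z)| + |exp z - s| * m z := by
            refine (abs_add_le _ _).trans ?_
            rw [abs_mul, abs_of_nonneg (hmnonneg z)]
        _ ≤ (s + exp z) * cv + |s - exp z| * m z := by
            rw [abs_sub_comm]
            nlinarith [exp_pos z, habs1]
  have hbnd : Tendsto (fun y => (slope Real.exp z y + exp z) * c y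
      + |slope Real.exp z y - exp z| * m z) (𝓝[≠] z) (𝓝 0) := by
    have h1 : Tendsto (fun y => (slope Real.exp z y + exp z) * c y) (𝓝[≠] z)
        (𝓝 ((exp z + exp z) * 0)) := (hs.add tendsto_const_nhds).mul hctend
    have h2 : Tendsto (fun y => |slope Real.exp z y - exp z| * m z) (𝓝[≠] z)
        (𝓝 (|exp z - exp z| * m z)) := ((hs.sub tendsto_const_nhds).abs).mul tendsto_const_nhds
    simpa using h1.add h2
  have := squeeze_zero_norm' hkey hbnd
  exact tendsto_sub_nhds_zero_iff.1 this
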